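/- arXiv:2011.10967 — 2 statements merged into one kernel-verified Lean document; each statement's English description precedes it below -/
import Mathlib

section
/- For each real p > 4, there exists ε ∈ (0,1) such that the H^p(T^2) norm of φ(z) = −ε z1 + (1 − ε^2) z2 is strictly greater than 1. In fact, ‖φ‖_{H^p(T^2)} = 1 + (p/4 − 1) ε^2 + O(ε^4) as ε → 0. -/
open scoped Real
open Set intervalIntegral

/-- The `H^p(𝕋²)` norm of `φ(z) = -ε z₁ + (1-ε²) z₂`. -/
noncomputable def hpnorm (p ε : ℝ) : ℝ :=
  ((1 / (2 * π) ^ 2) * ∫ θ₁ in (0:ℝ)..(2 * π), ∫ θ₂ in (0:ℝ)..(2 * π),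
      ‖-(ε : ℂ) * Complex.exp (Complex.I * θ₁)
        + (1 - (ε : ℂ) ^ 2) * Complex.exp (Complex.I * θ₂)‖ ^ p) ^ (1/p)

lemma abs_eq' (p ε θ₁ θ₂ : ℝ) (hp : 0 < p) :
    ‖-(ε : ℂ) * Complex.exp (Complex.I * θ₁)
        + (1 - (ε : ℂ) ^ 2) * Complex.exp (Complex.I * θ₂)‖ ^ p
      = (ε^2 + (1-ε^2)^2 - 2*ε*(1-ε^2)*Real.cos (θ₁ - θ₂)) ^ (p/2) := by
  set z := -(ε : ℂ) * Complex.exp (Complex.I * θ₁) + (1 - (ε : ℂ) ^ 2) * Complex.exp (Complex.I * θ₂) with hz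
  have h1 : ‖z‖ ^ p = ((‖z‖ ^ (2:ℕ) : ℝ)) ^ (p/2) := by
    rw [← Real.rpow_natCast (‖z‖) 2, ← Real.rpow_mul (norm_nonneg z)]
    norm_num
    congr 1
    ring
  rw [h1, Complex.sq_norm]
  congr 1
  have e1 : Complex.I * (θ₁:ℂ) = (θ₁:ℂ) * Complex.I := mul_comm _ _
  have e2 : Complex.I * (θ₂:ℂ) = (θ₂:ℂ) * Complex.I := mul_comm _ _
  rw [hz, e1, e2, Complex.exp_mul_I, Complex.exp_mul_I]
  rw [Complex.normSq_apply]
  simp [← Complex.ofReal_pow, Complex.cos_ofReal_re, Complex.sin_ofReal_re,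
    Complex.ofReal_re, Complex.ofReal_im, Real.cos_sub]
  nlinarith [Real.sin_sq_add_cos_sq θ₁, Real.sin_sq_add_cos_sq θ₂]

lemma hpnorm_eq (p ε : ℝ) (hp : 0 < p) :
    hpnorm p ε = ((1/(2*π)) * ∫ x in (0:ℝ)..(2*π),
      (ε^2 + (1-ε^2)^2 - 2*ε*(1-ε^2)*Real.cos x) ^ (p/2)) ^ (1/p) := by
  have hπ : (0:ℝ) < π := Real.pi_pos
  set f : ℝ → ℝ := fun x => (ε^2 + (1-ε^2)^2 - 2*ε*(1-ε^2)*Real.cos x) ^ (p/2) with hf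
  have hper : Function.Periodic f (2*π) := by
    intro x
    simp [hf, Real.cos_add_two_pi]
  have hinner : ∀ θ₁ : ℝ, (∫ θ₂ in (0:ℝ)..(2*π),
      ‖-(ε : ℂ) * Complex.exp (Complex.I * θ₁)
        + (1 - (ε : ℂ) ^ 2) * Complex.exp (Complex.I * θ₂)‖ ^ p)
      = ∫ x in (0:ℝ)..(2*π), f x := by
    intro θ₁
    have h1 : (∫ θ₂ in (0:ℝ)..(2*π),
        ‖-(ε : ℂ) * Complex.exp (Complex.I * θ₁)
          + (1 - (ε : ℂ) ^ 2) * Complex.exp (Complex.I * θ₂)‖ ^ p)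
        = ∫ θ₂ in (0:ℝ)..(2*π), f (θ₁ - θ₂) := by
      congr 1
      ext θ₂
      exact abs_eq' p ε θ₁ θ₂ hp
    rw [h1, intervalIntegral.integral_comp_sub_left f θ₁]
    have h2 := hper.intervalIntegral_add_eq (θ₁ - 2*π) 0
    simpa [sub_add_cancel] using h2
  have houter : (∫ θ₁ in (0:ℝ)..(2*π), ∫ θ₂ in (0:ℝ)..(2*π),
      ‖-(ε : ℂ) * Complex.exp (Complex.I * θ₁)
        + (1 - (ε : ℂ) ^ 2) * Complex.exp (Complex.I * θ₂)‖ ^ p)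
      = (2*π) * ∫ x in (0:ℝ)..(2*π), f x := by
    rw [intervalIntegral.integral_congr (g := fun _ => ∫ x in (0:ℝ)..(2*π), f x)
      (fun θ₁ _ => hinner θ₁)]
    rw [intervalIntegral.integral_const, smul_eq_mul]
    ring
  rw [hpnorm, houter]
  congr 1
  field_simp

lemma mvt_step {g g' : ℝ → ℝ} {K : ℝ} {n : ℕ}
    (hd : ∀ t ∈ Icc (-(1:ℝ)/2) (1/2), HasDerivAt g (g' t) t)
    (hg0 : g 0 = 0) (hK : 0 ≤ K)
    (hb : ∀ t ∈ Icc (-(1:ℝ)/2) (1/2), |g' t| ≤ K * |t| ^ n) :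
    ∀ t ∈ Icc (-(1:ℝ)/2) (1/2), |g t| ≤ K * |t| ^ (n + 1) := by
  intro t ht
  have h0 : (0:ℝ) ∈ Icc (-(1:ℝ)/2) (1/2) := by constructor <;> norm_num
  have hsub : uIcc (0:ℝ) t ⊆ Icc (-(1:ℝ)/2) (1/2) := uIcc_subset_Icc h0 ht
  have key : ‖g t - g 0‖ ≤ (K * |t| ^ n) * ‖t - 0‖ := by
    apply Convex.norm_image_sub_le_of_norm_hasDerivWithin_le
      (f' := g') (fun x hx => (hd x (hsub hx)).hasDerivWithinAt) ?_ (convex_uIcc 0 t)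
      left_mem_uIcc right_mem_uIcc
    intro x hx
    have h1 : |g' x| ≤ K * |x| ^ n := hb x (hsub hx)
    have h2 : |x| ≤ |t| := by
      rcases le_total 0 t with h | h
      · rw [uIcc_of_le h] at hx
        rw [abs_of_nonneg hx.1, abs_of_nonneg h]; exact hx.2
      · rw [uIcc_of_ge h] at hx
        rw [abs_of_nonpos (hx.2.trans_eq rfl), abs_of_nonpos h]; linarith [hx.1]
    calc ‖g' x‖ ≤ K * |x| ^ n := h1
      _ ≤ K * |t| ^ n := by
          gcongr
  simpa [hg0, abs_nonneg, pow_succ, mul_assoc, Real.norm_eq_abs] using key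

noncomputable def M (r : ℝ) : ℝ := (1/2:ℝ) ^ r + (3/2:ℝ) ^ r

lemma M_nonneg (r : ℝ) : 0 ≤ M r := by
  unfold M; positivity

lemma rpow_M_bound (r : ℝ) {t : ℝ} (ht : t ∈ Icc (-(1:ℝ)/2) (1/2)) :
    |(1 + t) ^ r| ≤ M r := by
  have h1 : (1/2:ℝ) ≤ 1 + t := by linarith [ht.1]
  have h2 : 1 + t ≤ (3/2:ℝ) := by linarith [ht.2]
  have hpos : (0:ℝ) < 1 + t := by linarith
  rw [abs_of_nonneg (Real.rpow_nonneg hpos.le r)]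
  rcases le_or_gt 0 r with hr | hr
  · have : (1+t) ^ r ≤ (3/2:ℝ) ^ r := Real.rpow_le_rpow hpos.le h2 hr
    have h3 : (0:ℝ) ≤ (1/2:ℝ) ^ r := Real.rpow_nonneg (by norm_num) r
    unfold M; linarith
  · have : (1+t) ^ r ≤ (1/2:ℝ) ^ r := Real.rpow_le_rpow_of_nonpos (by norm_num) h1 hr.le
    have h3 : (0:ℝ) ≤ (3/2:ℝ) ^ r := Real.rpow_nonneg (by norm_num) r
    unfold M; linarith

lemma hasDerivAt_one_add_rpow (r : ℝ) {t : ℝ} (ht : t ∈ Icc (-(1:ℝ)/2) (1/2)) :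
    HasDerivAt (fun s : ℝ => (1 + s) ^ r) (r * (1 + t) ^ (r - 1)) t := by
  have hne : (1:ℝ) + t ≠ 0 := by have := ht.1; intro h; linarith
  have h := (Real.hasDerivAt_rpow_const (x := 1 + t) (p := r) (Or.inl hne))
  have h2 : HasDerivAt (fun s : ℝ => 1 + s) 1 t := by
    simpa using (hasDerivAt_id t).const_add (1:ℝ)
  have h3 := h.comp t h2
  rw [mul_one] at h3
  exact h3

lemma taylor1 (s : ℝ) : ∀ t ∈ Icc (-(1:ℝ)/2) (1/2),
    |(1 + t) ^ s - 1 - s * t| ≤ (|s| * (|s - 1| * M (s - 2))) * t ^ 2 := by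
  have K0 : (0:ℝ) ≤ |s - 1| * M (s - 2) := mul_nonneg (abs_nonneg _) (M_nonneg _)
  have step1 : ∀ t ∈ Icc (-(1:ℝ)/2) (1/2),
      |(1 + t) ^ (s - 1) - 1| ≤ (|s - 1| * M (s - 2)) * |t| ^ 1 := by
    apply mvt_step (g' := fun t => (s - 1) * (1 + t) ^ (s - 1 - 1))
    · intro t ht; exact (hasDerivAt_one_add_rpow (s - 1) ht).sub_const 1
    · simp
    · exact K0
    · intro t ht
      rw [abs_mul, pow_zero, mul_one]
      have h2 : s - 1 - 1 = s - 2 := by ring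
      rw [h2]
      exact mul_le_mul_of_nonneg_left (rpow_M_bound _ ht) (abs_nonneg _)
  have step0 : ∀ t ∈ Icc (-(1:ℝ)/2) (1/2),
      |(1 + t) ^ s - 1 - s * t| ≤ (|s| * (|s - 1| * M (s - 2))) * |t| ^ 2 := by
    apply mvt_step (g' := fun t => s * ((1 + t) ^ (s - 1) - 1))
    · intro t ht
      have := ((hasDerivAt_one_add_rpow s ht).sub_const 1).sub
        ((hasDerivAt_id t).const_mul s)
      refine this.congr_deriv ?_
      ring
    · simp
    · exact mul_nonneg (abs_nonneg _) K0
    · intro t ht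
      rw [abs_mul, mul_assoc]
      exact mul_le_mul_of_nonneg_left (step1 t ht) (abs_nonneg _)
  intro t ht
  have := step0 t ht
  rwa [show |t| ^ 2 = t ^ 2 from sq_abs t] at this

lemma taylor3 (q : ℝ) : ∀ t ∈ Icc (-(1:ℝ)/2) (1/2),
    |(1 + t) ^ q - (1 + q * t + q * (q-1)/2 * t ^ 2 + q * (q-1) * (q-2)/6 * t ^ 3)|
      ≤ (|q| * (|q-1| * (|q-2| * (|q-3| * M (q-4))))) * t ^ 4 := by
  set K0 : ℝ := |q-3| * M (q-4) with hK0
  have hK0' : 0 ≤ K0 := mul_nonneg (abs_nonneg _) (M_nonneg _)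
  have step3 : ∀ t ∈ Icc (-(1:ℝ)/2) (1/2),
      |(1 + t) ^ (q-3) - 1| ≤ K0 * |t| ^ 1 := by
    apply mvt_step (g' := fun t => (q-3) * (1 + t) ^ (q-3-1))
    · intro t ht; exact (hasDerivAt_one_add_rpow (q-3) ht).sub_const 1
    · simp
    · exact hK0'
    · intro t ht
      rw [abs_mul, pow_zero, mul_one, show q-3-1 = q-4 by ring]
      exact mul_le_mul_of_nonneg_left (rpow_M_bound _ ht) (abs_nonneg _)
  have step2 : ∀ t ∈ Icc (-(1:ℝ)/2) (1/2),
      |(1 + t) ^ (q-2) - 1 - (q-2) * t| ≤ (|q-2| * K0) * |t| ^ 2 := by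
    apply mvt_step (g' := fun t => (q-2) * ((1 + t) ^ (q-3) - 1))
    · intro t ht
      have := ((hasDerivAt_one_add_rpow (q-2) ht).sub_const 1).sub
        ((hasDerivAt_id t).const_mul (q-2))
      refine this.congr_deriv ?_
      rw [show q-2-1 = q-3 by ring]; ring
    · simp
    · exact mul_nonneg (abs_nonneg _) hK0'
    · intro t ht
      rw [abs_mul, mul_assoc]
      exact mul_le_mul_of_nonneg_left (step3 t ht) (abs_nonneg _)
  have step1 : ∀ t ∈ Icc (-(1:ℝ)/2) (1/2),
      |(1 + t) ^ (q-1) - 1 - (q-1) * t - (q-1)*(q-2)/2 * t ^ 2|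
        ≤ (|q-1| * (|q-2| * K0)) * |t| ^ 3 := by
    apply mvt_step (g' := fun t => (q-1) * ((1 + t) ^ (q-2) - 1 - (q-2) * t))
    · intro t ht
      have h1 : HasDerivAt (fun t : ℝ => (q-1)*(q-2)/2 * t ^ 2) ((q-1)*(q-2)/2 * (2*t)) t := by
        simpa using ((hasDerivAt_pow 2 t).const_mul ((q-1)*(q-2)/2))
      have := (((hasDerivAt_one_add_rpow (q-1) ht).sub_const 1).sub
        ((hasDerivAt_id t).const_mul (q-1))).sub h1
      refine this.congr_deriv ?_
      rw [show q-1-1 = q-2 by ring]; ring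
    · simp
    · exact mul_nonneg (abs_nonneg _) (mul_nonneg (abs_nonneg _) hK0')
    · intro t ht
      rw [abs_mul, mul_assoc]
      exact mul_le_mul_of_nonneg_left (step2 t ht) (abs_nonneg _)
  have step0 : ∀ t ∈ Icc (-(1:ℝ)/2) (1/2),
      |(1 + t) ^ q - (1 + q * t + q * (q-1)/2 * t ^ 2 + q * (q-1) * (q-2)/6 * t ^ 3)|
        ≤ (|q| * (|q-1| * (|q-2| * K0))) * |t| ^ 4 := by
    apply mvt_step (g' := fun t => q * ((1 + t) ^ (q-1) - 1 - (q-1) * t - (q-1)*(q-2)/2 * t ^ 2))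
    · intro t ht
      have h2 : HasDerivAt (fun t : ℝ => q*(q-1)/2 * t ^ 2) (q*(q-1)/2 * (2*t)) t := by
        simpa using ((hasDerivAt_pow 2 t).const_mul (q*(q-1)/2))
      have h3 : HasDerivAt (fun t : ℝ => q*(q-1)*(q-2)/6 * t ^ 3) (q*(q-1)*(q-2)/6 * (3*t^2)) t := by
        simpa using ((hasDerivAt_pow 3 t).const_mul (q*(q-1)*(q-2)/6))
      have h1 : HasDerivAt (fun t : ℝ => 1 + q * t + q*(q-1)/2 * t ^ 2 + q*(q-1)*(q-2)/6 * t ^ 3)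
          (q + q*(q-1)/2 * (2*t) + q*(q-1)*(q-2)/6 * (3*t^2)) t := by
        have := ((((hasDerivAt_id t).const_mul q).const_add 1).add h2).add h3
        refine this.congr_deriv ?_
        ring
      have := (hasDerivAt_one_add_rpow q ht).sub h1
      refine this.congr_deriv ?_
      ring
    · simp
    · exact mul_nonneg (abs_nonneg _) (mul_nonneg (abs_nonneg _) (mul_nonneg (abs_nonneg _) hK0'))
    · intro t ht
      rw [abs_mul, mul_assoc]
      exact mul_le_mul_of_nonneg_left (step1 t ht) (abs_nonneg _)
  intro t ht
  have := step0 t ht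
  rwa [show |t| ^ 4 = t ^ 4 by rw [← abs_pow]; exact abs_of_nonneg (by positivity)] at this

lemma cos_cube_integral : ∫ x in (0:ℝ)..(2*π), Real.cos x ^ 3 = 0 := by
  have h : ∀ x ∈ uIcc (0:ℝ) (2*π),
      HasDerivAt (fun y => Real.sin y - Real.sin y ^ 3 / 3) (Real.cos x ^ 3) x := by
    intro x _
    have h1 : HasDerivAt (fun y => Real.sin y - Real.sin y ^ 3 / 3)
        (Real.cos x - (3 * Real.sin x ^ 2 * Real.cos x) / 3) x := by
      have h2 := (Real.hasDerivAt_sin x).pow 3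
      refine ((Real.hasDerivAt_sin x).sub (h2.div_const 3)).congr_deriv ?_
      norm_num
    convert h1 using 1
    have h3 := Real.sin_sq_add_cos_sq x
    linear_combination (Real.cos x) * h3
  rw [intervalIntegral.integral_eq_sub_of_hasDerivAt h
    ((Real.continuous_cos.pow 3).intervalIntegrable 0 (2*π))]
  simp [Real.sin_two_pi]

lemma cos_integral : ∫ x in (0:ℝ)..(2*π), Real.cos x = 0 := by
  simp [integral_cos, Real.sin_two_pi]

lemma cos_sq_integral : ∫ x in (0:ℝ)..(2*π), Real.cos x ^ 2 = π := by
  rw [integral_cos_sq]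
  simp [Real.sin_two_pi, Real.cos_two_pi]

lemma B_bounds (ε : ℝ) (h0 : 0 ≤ ε) (h1 : ε ≤ 1) :
    |1/2 + 17/3*ε^2 - 11/2*ε^4 + ε^6 + 1/3*ε^8| ≤ 13 ∧
    |3/2 - 17/2*ε^2 + 8*ε^4 - 3/2*ε^6 - 1/2*ε^8| ≤ 20 ∧
    |-1 + 17/6*ε^2 - 5/2*ε^4 + 1/2*ε^6 + 1/6*ε^8| ≤ 7 := by
  have e2 : ε^2 ≤ 1 := pow_le_one₀ h0 h1
  have e4 : ε^4 ≤ 1 := pow_le_one₀ h0 h1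
  have e6 : ε^6 ≤ 1 := pow_le_one₀ h0 h1
  have e8 : ε^8 ≤ 1 := pow_le_one₀ h0 h1
  have p2 : 0 ≤ ε^2 := by positivity
  have p4 : 0 ≤ ε^4 := by positivity
  have p6 : 0 ≤ ε^6 := by positivity
  have p8 : 0 ≤ ε^8 := by positivity
  refine ⟨abs_le.2 ⟨by linarith, by linarith⟩, abs_le.2 ⟨by linarith, by linarith⟩,
    abs_le.2 ⟨by linarith, by linarith⟩⟩

noncomputable def KT (q : ℝ) : ℝ := |q| * (|q-1| * (|q-2| * (|q-3| * M (q-4))))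

lemma KT_nonneg (q : ℝ) : 0 ≤ KT q := by
  unfold KT
  have := M_nonneg (q-4)
  positivity

noncomputable def CC (q : ℝ) : ℝ := 13*q + 20*q^2 + 7*q^3 + 81 * KT q

lemma CC_pos (q : ℝ) (hq : 2 < q) : 0 < CC q := by
  have := KT_nonneg q
  unfold CC
  nlinarith

set_option maxHeartbeats 1000000 in
lemma mean_expand (q ε : ℝ) (hq : 2 < q) (hε : 0 < ε) (hε' : ε ≤ 1/8) :
    |(1/(2*π)) * (∫ x in (0:ℝ)..(2*π), (ε^2+(1-ε^2)^2 - 2*ε*(1-ε^2)*Real.cos x) ^ q)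
      - (1 + (q^2-2*q)*ε^2)| ≤ CC q * ε^4 := by
  have hπ : (0:ℝ) < π := Real.pi_pos
  have hε1 : ε ≤ 1 := by linarith
  set a : ℝ := ε^4 - ε^2 with ha
  set b : ℝ := -(2*ε*(1-ε^2)) with hb
  clear_value a b
  have hu3 : ∀ x : ℝ, |a + b * Real.cos x| ≤ 3*ε := by
    intro x
    have h1 : |a| ≤ ε^2 := by
      rw [ha, abs_le]
      constructor <;> nlinarith [pow_le_pow_left₀ hε.le hε1 2]
    have h2 : |b * Real.cos x| ≤ 2*ε := by
      rw [abs_mul]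
      have hc := Real.abs_cos_le_one x
      have hbb : |b| ≤ 2*ε := by
        rw [hb, abs_le]
        constructor <;> nlinarith
      calc |b| * |Real.cos x| ≤ (2*ε) * 1 :=
        mul_le_mul hbb hc (abs_nonneg _) (by positivity)
      _ = 2*ε := by ring
    calc |a + b * Real.cos x| ≤ |a| + |b * Real.cos x| := abs_add_le _ _
      _ ≤ ε^2 + 2*ε := by linarith
      _ ≤ 3*ε := by nlinarith
  have huI : ∀ x : ℝ, a + b * Real.cos x ∈ Icc (-(1:ℝ)/2) (1/2) := by
    intro x
    obtain ⟨h1, h2⟩ := abs_le.1 (hu3 x)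
    rw [mem_Icc]
    exact ⟨by linarith, by linarith⟩
  have hDeq : ∀ x : ℝ, ε^2+(1-ε^2)^2 - 2*ε*(1-ε^2)*Real.cos x = 1 + (a + b * Real.cos x) := by
    intro x; rw [ha, hb]; ring
  -- remainder bound
  have hR : ∀ x : ℝ, |(1 + (a + b*Real.cos x))^q
      - (1 + q*(a + b*Real.cos x) + q*(q-1)/2*(a + b*Real.cos x)^2
          + q*(q-1)*(q-2)/6*(a + b*Real.cos x)^3)| ≤ KT q * (81*ε^4) := by
    intro x
    refine (taylor3 q _ (huI x)).trans ?_
    have h4 : (a + b*Real.cos x)^4 ≤ 81*ε^4 := by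
      have h5 : |a + b*Real.cos x|^4 ≤ (3*ε)^4 :=
        pow_le_pow_left₀ (abs_nonneg _) (hu3 x) 4
      calc (a + b*Real.cos x)^4 = |a + b*Real.cos x|^4 := by
            rw [← abs_pow]; exact (abs_of_nonneg (by positivity)).symm
        _ ≤ (3*ε)^4 := h5
        _ = 81*ε^4 := by ring
    rw [KT]
    refine mul_le_mul_of_nonneg_left h4 ?_
    have := M_nonneg (q-4)
    positivity
  have hq0 : (0:ℝ) < q := by linarith
  -- continuity facts
  have hcontu0 : Continuous fun x : ℝ => a + b*Real.cos x :=
    continuous_const.add (continuous_const.mul Real.continuous_cos)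
  have hcontU : Continuous fun x : ℝ => (1 + (a + b*Real.cos x)) ^ q := by
    apply Continuous.rpow_const (continuous_const.add hcontu0)
    intro x; exact Or.inr hq0.le
  have hcontP : Continuous fun x : ℝ => 1 + q*(a + b*Real.cos x)
      + q*(q-1)/2*(a + b*Real.cos x)^2 + q*(q-1)*(q-2)/6*(a + b*Real.cos x)^3 :=
    ((continuous_const.add (continuous_const.mul hcontu0)).add
      (continuous_const.mul (hcontu0.pow 2))).add
      (continuous_const.mul (hcontu0.pow 3))
  -- the main integral in terms of u
  have hmain : (∫ x in (0:ℝ)..(2*π), (ε^2+(1-ε^2)^2 - 2*ε*(1-ε^2)*Real.cos x) ^ q)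
      = ∫ x in (0:ℝ)..(2*π), (1 + (a + b*Real.cos x)) ^ q := by
    apply intervalIntegral.integral_congr
    intro x _
    exact congrArg (fun y : ℝ => y ^ q) (hDeq x)
  -- polynomial part integral
  have hPint : (∫ x in (0:ℝ)..(2*π), (1 + q*(a + b*Real.cos x)
        + q*(q-1)/2*(a + b*Real.cos x)^2 + q*(q-1)*(q-2)/6*(a + b*Real.cos x)^3))
      = (1 + q*a + q*(q-1)/2*a^2 + q*(q-1)*(q-2)/6*a^3) * (2*π)
        + (q*(q-1)/2*b^2 + q*(q-1)*(q-2)/2*a*b^2) * π := by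
    have hrw : Set.EqOn (fun x : ℝ => 1 + q*(a + b*Real.cos x)
        + q*(q-1)/2*(a + b*Real.cos x)^2 + q*(q-1)*(q-2)/6*(a + b*Real.cos x)^3)
        (fun x : ℝ => (1 + q*a + q*(q-1)/2*a^2 + q*(q-1)*(q-2)/6*a^3)
          + ((q*b + q*(q-1)*a*b + q*(q-1)*(q-2)/2*a^2*b) * Real.cos x
          + ((q*(q-1)/2*b^2 + q*(q-1)*(q-2)/2*a*b^2) * Real.cos x^2
          + (q*(q-1)*(q-2)/6*b^3) * Real.cos x^3))) (uIcc 0 (2*π)) := by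
      intro x _
      simp only
      ring
    rw [intervalIntegral.integral_congr hrw]
    have i0 : IntervalIntegrable (fun _ : ℝ => (1 + q*a + q*(q-1)/2*a^2
        + q*(q-1)*(q-2)/6*a^3)) MeasureTheory.volume 0 (2*π) :=
      intervalIntegrable_const
    have i1 : IntervalIntegrable (fun x : ℝ => (q*b + q*(q-1)*a*b
        + q*(q-1)*(q-2)/2*a^2*b) * Real.cos x) MeasureTheory.volume 0 (2*π) :=
      (continuous_const.mul Real.continuous_cos).intervalIntegrable _ _
    have i2 : IntervalIntegrable (fun x : ℝ => (q*(q-1)/2*b^2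
        + q*(q-1)*(q-2)/2*a*b^2) * Real.cos x^2) MeasureTheory.volume 0 (2*π) :=
      (continuous_const.mul (Real.continuous_cos.pow 2)).intervalIntegrable _ _
    have i3 : IntervalIntegrable (fun x : ℝ => (q*(q-1)*(q-2)/6*b^3) * Real.cos x^3)
        MeasureTheory.volume 0 (2*π) :=
      (continuous_const.mul (Real.continuous_cos.pow 3)).intervalIntegrable _ _
    rw [intervalIntegral.integral_add i0 (i1.add (i2.add i3)),
        intervalIntegral.integral_add i1 (i2.add i3),
        intervalIntegral.integral_add i2 i3,
        intervalIntegral.integral_const_mul, intervalIntegral.integral_const_mul,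
        intervalIntegral.integral_const_mul,
        cos_integral, cos_sq_integral, cos_cube_integral,
        intervalIntegral.integral_const, smul_eq_mul]
    ring
  -- split off remainder
  have hsub : (∫ x in (0:ℝ)..(2*π), ((1 + (a + b*Real.cos x)) ^ q
        - (1 + q*(a + b*Real.cos x) + q*(q-1)/2*(a + b*Real.cos x)^2
          + q*(q-1)*(q-2)/6*(a + b*Real.cos x)^3)))
      = (∫ x in (0:ℝ)..(2*π), (1 + (a + b*Real.cos x)) ^ q)
        - ∫ x in (0:ℝ)..(2*π), (1 + q*(a + b*Real.cos x)
          + q*(q-1)/2*(a + b*Real.cos x)^2 + q*(q-1)*(q-2)/6*(a + b*Real.cos x)^3) :=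
    intervalIntegral.integral_sub (hcontU.intervalIntegrable _ _)
      (hcontP.intervalIntegrable _ _)
  set R : ℝ := ∫ x in (0:ℝ)..(2*π), ((1 + (a + b*Real.cos x)) ^ q
      - (1 + q*(a + b*Real.cos x) + q*(q-1)/2*(a + b*Real.cos x)^2
        + q*(q-1)*(q-2)/6*(a + b*Real.cos x)^3)) with hRdef
  have hRbound : |R| ≤ (KT q * (81*ε^4)) * (2*π) := by
    have h6 := intervalIntegral.norm_integral_le_of_norm_le_const
      (C := KT q * (81*ε^4)) (f := fun x : ℝ => (1 + (a + b*Real.cos x)) ^ q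
        - (1 + q*(a + b*Real.cos x) + q*(q-1)/2*(a + b*Real.cos x)^2
          + q*(q-1)*(q-2)/6*(a + b*Real.cos x)^3)) (a := 0) (b := 2*π)
      (fun x _ => hR x)
    rw [← hRdef] at h6
    calc |R| ≤ KT q * (81*ε^4) * |2*π - 0| := h6
      _ = KT q * (81*ε^4) * (2*π) := by
          rw [sub_zero, abs_of_pos (by positivity)]
  -- total decomposition
  have htot : (1/(2*π)) * (∫ x in (0:ℝ)..(2*π),
        (ε^2+(1-ε^2)^2 - 2*ε*(1-ε^2)*Real.cos x) ^ q) - (1 + (q^2-2*q)*ε^2)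
      = ((1 + q*a + q*(q-1)/2*a^2 + q*(q-1)*(q-2)/6*a^3)
          + (q*(q-1)/2*b^2 + q*(q-1)*(q-2)/2*a*b^2)/2 - (1 + (q^2-2*q)*ε^2))
        + (1/(2*π)) * R := by
    rw [hmain]
    have h7 : (∫ x in (0:ℝ)..(2*π), (1 + (a + b*Real.cos x)) ^ q)
        = ((1 + q*a + q*(q-1)/2*a^2 + q*(q-1)*(q-2)/6*a^3) * (2*π)
          + (q*(q-1)/2*b^2 + q*(q-1)*(q-2)/2*a*b^2) * π) + R := by
      linarith [hsub, hPint]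
    rw [h7]
    field_simp
    ring
  rw [htot]
  -- bound the polynomial part
  obtain ⟨hB1, hB2, hB3⟩ := B_bounds ε hε.le hε1
  have hXeq : (1 + q*a + q*(q-1)/2*a^2 + q*(q-1)*(q-2)/6*a^3)
      + (q*(q-1)/2*b^2 + q*(q-1)*(q-2)/2*a*b^2)/2 - (1 + (q^2-2*q)*ε^2)
      = ε^4 * (q*(1/2 + 17/3*ε^2 - 11/2*ε^4 + ε^6 + 1/3*ε^8)
        + q^2*(3/2 - 17/2*ε^2 + 8*ε^4 - 3/2*ε^6 - 1/2*ε^8)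
        + q^3*(-1 + 17/6*ε^2 - 5/2*ε^4 + 1/2*ε^6 + 1/6*ε^8)) := by
    rw [ha, hb]
    ring
  have hq2 : (0:ℝ) < q^2 := by positivity
  have hq3 : (0:ℝ) < q^3 := by positivity
  have hW : |q*(1/2 + 17/3*ε^2 - 11/2*ε^4 + ε^6 + 1/3*ε^8)
        + q^2*(3/2 - 17/2*ε^2 + 8*ε^4 - 3/2*ε^6 - 1/2*ε^8)
        + q^3*(-1 + 17/6*ε^2 - 5/2*ε^4 + 1/2*ε^6 + 1/6*ε^8)|
      ≤ 13*q + 20*q^2 + 7*q^3 := by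
    have t1 : |q*(1/2 + 17/3*ε^2 - 11/2*ε^4 + ε^6 + 1/3*ε^8)| ≤ q*13 := by
      rw [abs_mul, abs_of_pos hq0]
      exact mul_le_mul_of_nonneg_left hB1 hq0.le
    have t2 : |q^2*(3/2 - 17/2*ε^2 + 8*ε^4 - 3/2*ε^6 - 1/2*ε^8)| ≤ q^2*20 := by
      rw [abs_mul, abs_of_pos hq2]
      exact mul_le_mul_of_nonneg_left hB2 hq2.le
    have t3 : |q^3*(-1 + 17/6*ε^2 - 5/2*ε^4 + 1/2*ε^6 + 1/6*ε^8)| ≤ q^3*7 := by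
      rw [abs_mul, abs_of_pos hq3]
      exact mul_le_mul_of_nonneg_left hB3 hq3.le
    calc |q*(1/2 + 17/3*ε^2 - 11/2*ε^4 + ε^6 + 1/3*ε^8)
        + q^2*(3/2 - 17/2*ε^2 + 8*ε^4 - 3/2*ε^6 - 1/2*ε^8)
        + q^3*(-1 + 17/6*ε^2 - 5/2*ε^4 + 1/2*ε^6 + 1/6*ε^8)|
        ≤ |q*(1/2 + 17/3*ε^2 - 11/2*ε^4 + ε^6 + 1/3*ε^8)
          + q^2*(3/2 - 17/2*ε^2 + 8*ε^4 - 3/2*ε^6 - 1/2*ε^8)|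
          + |q^3*(-1 + 17/6*ε^2 - 5/2*ε^4 + 1/2*ε^6 + 1/6*ε^8)| := abs_add_le _ _
      _ ≤ (|q*(1/2 + 17/3*ε^2 - 11/2*ε^4 + ε^6 + 1/3*ε^8)|
          + |q^2*(3/2 - 17/2*ε^2 + 8*ε^4 - 3/2*ε^6 - 1/2*ε^8)|)
          + |q^3*(-1 + 17/6*ε^2 - 5/2*ε^4 + 1/2*ε^6 + 1/6*ε^8)| := by
          have := abs_add_le (q*(1/2 + 17/3*ε^2 - 11/2*ε^4 + ε^6 + 1/3*ε^8))
            (q^2*(3/2 - 17/2*ε^2 + 8*ε^4 - 3/2*ε^6 - 1/2*ε^8))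
          linarith
      _ ≤ 13*q + 20*q^2 + 7*q^3 := by linarith
  have hX : |(1 + q*a + q*(q-1)/2*a^2 + q*(q-1)*(q-2)/6*a^3)
      + (q*(q-1)/2*b^2 + q*(q-1)*(q-2)/2*a*b^2)/2 - (1 + (q^2-2*q)*ε^2)|
      ≤ (13*q + 20*q^2 + 7*q^3) * ε^4 := by
    rw [hXeq, abs_mul, abs_of_nonneg (by positivity : (0:ℝ) ≤ ε^4)]
    calc ε^4 * |q*(1/2 + 17/3*ε^2 - 11/2*ε^4 + ε^6 + 1/3*ε^8)
        + q^2*(3/2 - 17/2*ε^2 + 8*ε^4 - 3/2*ε^6 - 1/2*ε^8)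
        + q^3*(-1 + 17/6*ε^2 - 5/2*ε^4 + 1/2*ε^6 + 1/6*ε^8)|
        ≤ ε^4 * (13*q + 20*q^2 + 7*q^3) :=
          mul_le_mul_of_nonneg_left hW (by positivity)
      _ = (13*q + 20*q^2 + 7*q^3) * ε^4 := by ring
  have hY : |(1/(2*π)) * R| ≤ 81 * KT q * ε^4 := by
    rw [abs_mul, abs_of_pos (by positivity : (0:ℝ) < 1/(2*π))]
    calc (1/(2*π)) * |R| ≤ (1/(2*π)) * ((KT q * (81*ε^4)) * (2*π)) :=
          mul_le_mul_of_nonneg_left hRbound (by positivity)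
      _ = 81 * KT q * ε^4 := by field_simp
  calc |((1 + q*a + q*(q-1)/2*a^2 + q*(q-1)*(q-2)/6*a^3)
        + (q*(q-1)/2*b^2 + q*(q-1)*(q-2)/2*a*b^2)/2 - (1 + (q^2-2*q)*ε^2))
        + (1/(2*π)) * R|
      ≤ |(1 + q*a + q*(q-1)/2*a^2 + q*(q-1)*(q-2)/6*a^3)
        + (q*(q-1)/2*b^2 + q*(q-1)*(q-2)/2*a*b^2)/2 - (1 + (q^2-2*q)*ε^2)|
        + |(1/(2*π)) * R| := abs_add_le _ _
    _ ≤ (13*q + 20*q^2 + 7*q^3) * ε^4 + 81 * KT q * ε^4 := by linarith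
    _ = CC q * ε^4 := by rw [CC]; ring

set_option maxHeartbeats 2000000 in
theorem stmt17 (p : ℝ) (hp : 4 < p) :
    (∃ ε : ℝ, 0 < ε ∧ ε < 1 ∧ 1 < hpnorm p ε) ∧
    ∃ C δ : ℝ, 0 < C ∧ 0 < δ ∧ ∀ ε : ℝ, 0 < ε → ε < δ →
      |hpnorm p ε - (1 + (p/4 - 1) * ε ^ 2)| ≤ C * ε ^ 4 := by
  have hp0 : (0:ℝ) < p := by linarith
  have hq : (2:ℝ) < p/2 := by linarith
  have hApos : (0:ℝ) < (p/2)^2 - 2*(p/2) + CC (p/2) := by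
    have := CC_pos (p/2) hq
    nlinarith
  have hK20 : 0 ≤ |1/p| * (|1/p - 1| * M (1/p - 2)) := by
    have := M_nonneg (1/p - 2); positivity
  set K2 : ℝ := |1/p| * (|1/p - 1| * M (1/p - 2)) with hK2def
  set A : ℝ := (p/2)^2 - 2*(p/2) + CC (p/2) with hAdef
  set C : ℝ := K2 * A^2 + CC (p/2) + 1 with hCdef
  set δ : ℝ := min (1/8) (1/(2*A+1)) with hδdef
  clear_value K2 A C δ
  have hCCpos := CC_pos (p/2) hq
  have hCpos : 0 < C := by
    rw [hCdef]
    nlinarith [mul_nonneg hK20 (sq_nonneg A)]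
  have hδpos : 0 < δ := by
    rw [hδdef]
    exact lt_min (by norm_num) (div_pos one_pos (by linarith))
  have main : ∀ ε : ℝ, 0 < ε → ε < δ → |hpnorm p ε - (1 + (p/4 - 1) * ε ^ 2)| ≤ C * ε ^ 4 := by
    intro ε hε hεδ
    have hεδ' := hεδ
    rw [hδdef] at hεδ'
    have hε8 : ε ≤ 1/8 := le_trans hεδ'.le (min_le_left _ _)
    have hεA : ε ≤ 1/(2*A+1) := le_trans hεδ'.le (min_le_right _ _)
    have hε1 : ε ≤ 1 := by linarith
    have hme := mean_expand (p/2) ε hq hε hε8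
    set f : ℝ := (1/(2*π)) * ∫ x in (0:ℝ)..(2*π),
      (ε^2+(1-ε^2)^2 - 2*ε*(1-ε^2)*Real.cos x) ^ (p/2) with hf
    set w : ℝ := f - 1 with hw
    have hme' : |w - ((p/2)^2 - 2*(p/2))*ε^2| ≤ CC (p/2) * ε^4 := by
      have heq : w - ((p/2)^2 - 2*(p/2))*ε^2 = f - (1 + ((p/2)^2 - 2*(p/2))*ε^2) := by
        rw [hw]; ring
      rw [heq]
      exact hme
    have hnorm : hpnorm p ε = (1 + w) ^ (1/p) := by
      rw [hpnorm_eq p ε hp0]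
      congr 1
      rw [hw, hf]
      ring
    clear_value f w
    have hε42 : ε^4 ≤ ε^2 := by
      nlinarith [mul_nonneg (mul_nonneg (sq_nonneg ε) (by linarith : (0:ℝ) ≤ 1-ε))
        (by linarith : (0:ℝ) ≤ 1+ε)]
    have hqq : (0:ℝ) < (p/2)^2 - 2*(p/2) := by nlinarith
    have hwb : |w| ≤ A * ε^2 := by
      calc |w| = |(w - ((p/2)^2 - 2*(p/2))*ε^2) + ((p/2)^2 - 2*(p/2))*ε^2| :=
            congrArg abs (by ring)
        _ ≤ |w - ((p/2)^2 - 2*(p/2))*ε^2| + |((p/2)^2 - 2*(p/2))*ε^2| := abs_add_le _ _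
        _ ≤ CC (p/2) * ε^4 + ((p/2)^2 - 2*(p/2))*ε^2 := by
            have h1 : |((p/2)^2 - 2*(p/2))*ε^2| = ((p/2)^2 - 2*(p/2))*ε^2 :=
              abs_of_nonneg (mul_nonneg hqq.le (sq_nonneg ε))
            rw [h1]
            linarith [hme']
        _ ≤ A * ε^2 := by
            rw [hAdef]
            nlinarith [hCCpos, sq_nonneg ε]
    have hwI : w ∈ Icc (-(1:ℝ)/2) (1/2) := by
      have h2 : A * ε^2 ≤ 1/2 := by
        have h3 : A * ε^2 ≤ A * ε := by
          have h3' : 0 ≤ ε*(1-ε) := mul_nonneg hε.le (by linarith)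
          nlinarith [mul_nonneg hApos.le h3']
        have h4 : A * ε ≤ A * (1/(2*A+1)) :=
          mul_le_mul_of_nonneg_left hεA hApos.le
        have h5 : A * (1/(2*A+1)) ≤ 1/2 := by
          rw [mul_one_div, div_le_iff₀ (by linarith : (0:ℝ) < 2*A+1)]
          linarith
        linarith
      obtain ⟨hl, hr⟩ := abs_le.1 hwb
      rw [mem_Icc]
      constructor <;> linarith
    have htay := taylor1 (1/p) w hwI
    have hdecomp : hpnorm p ε - (1 + (p/4 - 1) * ε ^ 2)
        = ((1 + w)^(1/p) - 1 - (1/p)*w) + (1/p)*(w - ((p/2)^2 - 2*(p/2))*ε^2) := by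
      rw [hnorm]
      field_simp
      ring
    rw [hdecomp]
    have h6 : |(1/p)*(w - ((p/2)^2 - 2*(p/2))*ε^2)| ≤ CC (p/2) * ε^4 := by
      rw [abs_mul, abs_of_pos (by positivity : (0:ℝ) < 1/p)]
      calc (1/p) * |w - ((p/2)^2 - 2*(p/2))*ε^2| ≤ 1 * |w - ((p/2)^2 - 2*(p/2))*ε^2| := by
            apply mul_le_mul_of_nonneg_right _ (abs_nonneg _)
            rw [div_le_one hp0]; linarith
        _ ≤ CC (p/2) * ε^4 := by rw [one_mul]; exact hme'
    have h7 : |(1 + w)^(1/p) - 1 - (1/p)*w| ≤ K2 * (A^2 * ε^4) := by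
      refine htay.trans ?_
      have h8 : w^2 ≤ A^2 * ε^4 := by
        have h8' := pow_le_pow_left₀ (abs_nonneg w) hwb 2
        rw [sq_abs] at h8'
        calc w^2 ≤ (A*ε^2)^2 := h8'
          _ = A^2 * ε^4 := by ring
      rw [hK2def]
      rw [hK2def] at hK20
      exact mul_le_mul_of_nonneg_left h8 hK20
    calc |((1 + w)^(1/p) - 1 - (1/p)*w) + (1/p)*(w - ((p/2)^2 - 2*(p/2))*ε^2)|
        ≤ |(1 + w)^(1/p) - 1 - (1/p)*w| + |(1/p)*(w - ((p/2)^2 - 2*(p/2))*ε^2)| := abs_add_le _ _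
      _ ≤ K2 * (A^2 * ε^4) + CC (p/2) * ε^4 := by linarith
      _ ≤ C * ε^4 := by
          rw [hCdef]
          nlinarith [pow_pos hε 4]
  refine ⟨?_, C, δ, hCpos, hδpos, main⟩
  have hc4 : (0:ℝ) < p/4 - 1 := by linarith
  set ε : ℝ := min (δ/2) (min (1/2) ((p/4-1)/(2*C))) with hεdef
  have hεpos : 0 < ε := by
    rw [hεdef]
    exact lt_min (by linarith) (lt_min (by norm_num) (div_pos (by linarith) (by linarith)))
  have hεδ : ε < δ := by
    calc ε ≤ δ/2 := min_le_left _ _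
      _ < δ := by linarith
  have hε1 : ε < 1 := by
    calc ε ≤ 1/2 := le_trans (min_le_right _ _) (min_le_left _ _)
      _ < 1 := by norm_num
  have hεC : ε ≤ (p/4-1)/(2*C) := le_trans (min_le_right _ _) (min_le_right _ _)
  clear_value ε
  have h := (abs_le.1 (main ε hεpos hεδ)).1
  refine ⟨ε, hεpos, hε1, ?_⟩
  have h9 : C * ε^4 ≤ (p/4-1)*ε^2/2 := by
    have e1 : ε^2 ≤ ε := by nlinarith [mul_nonneg hεpos.le (by linarith : (0:ℝ) ≤ 1-ε)]
    have s1 : C * ε^4 ≤ (C*ε^2) * ε := by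
      have e2 : C * ε^4 = (C*ε^2)*ε^2 := by ring
      rw [e2]
      exact mul_le_mul_of_nonneg_left e1 (mul_nonneg hCpos.le (sq_nonneg ε))
    have s2 : (C*ε^2) * ε ≤ (C*ε^2) * ((p/4-1)/(2*C)) :=
      mul_le_mul_of_nonneg_left hεC (mul_nonneg hCpos.le (sq_nonneg ε))
    have s3 : (C*ε^2) * ((p/4-1)/(2*C)) = (p/4-1)*ε^2/2 := by
      field_simp
    linarith
  nlinarith [mul_pos hc4 (pow_pos hεpos 2)]
end

section
/- The harmonic function f(z) = c · Arg((i − z)/(i + z)) maps the open unit disc D into D if and only if |c| ≤ 2/π, and it satisfies f(0) = 0 and |∂f(0)| = |∂̄f(0)| = |c|, where ∂ and ∂̄ are the Wirtinger derivatives. -/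
open scoped Real

/-- `f(z) = c · Arg((i - z)/(i + z))`, viewed as a complex-valued (real-valued) function. -/
noncomputable def harmF (c : ℝ) (z : ℂ) : ℂ :=
  ((c * Complex.arg ((Complex.I - z) / (Complex.I + z)) : ℝ) : ℂ)

lemma aux_Iz_ne (z : ℂ) (hz : ‖z‖ < 1) : Complex.I + z ≠ 0 := by
  intro h
  have hz' : z = -Complex.I := by linear_combination h - Complex.I
  rw [hz'] at hz
  simp at hz

lemma aux_re_pos (z : ℂ) (hz : ‖z‖ < 1) :
    0 < ((Complex.I - z) / (Complex.I + z)).re := by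
  have hne : Complex.I + z ≠ 0 := aux_Iz_ne z hz
  have hN : 0 < Complex.normSq (Complex.I + z) := by rwa [Complex.normSq_pos]
  have h1 : z.re ^ 2 + z.im ^ 2 < 1 := by
    have h2 := Complex.sq_norm z
    have h3 : ‖z‖ ^ 2 < 1 := by nlinarith [norm_nonneg z]
    rw [Complex.normSq_apply] at h2
    nlinarith
  rw [Complex.div_re]
  simp only [Complex.sub_re, Complex.add_re, Complex.sub_im, Complex.add_im,
    Complex.I_re, Complex.I_im, zero_sub, zero_add]
  rw [← add_div]
  apply div_pos _ hN
  nlinarith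

lemma aux_exists (θ : ℝ) (h0 : 0 < θ) (h2 : θ < π / 2) :
    ∃ z : ℂ, ‖z‖ < 1 ∧
      Complex.arg ((Complex.I - z) / (Complex.I + z)) = θ := by
  set e : ℂ := Complex.exp (θ * Complex.I) with he
  have hre : e.re = Real.cos θ := Complex.exp_ofReal_mul_I_re θ
  have him : e.im = Real.sin θ := Complex.exp_ofReal_mul_I_im θ
  have hcos : 0 < Real.cos θ :=
    Real.cos_pos_of_mem_Ioo ⟨by linarith [Real.pi_pos], h2⟩
  have hns : Complex.normSq e = 1 := by
    rw [Complex.normSq_apply, hre, him]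
    nlinarith [Real.sin_sq_add_cos_sq θ]
  have hne : (1 : ℂ) + e ≠ 0 := by
    intro h
    have he1 : e = -1 := by linear_combination h
    rw [he1] at hre
    simp at hre
    linarith
  have hne' : (1 : ℂ) + e ≠ 0 := hne
  refine ⟨Complex.I * (1 - e) / (1 + e), ?_, ?_⟩
  · rw [norm_div, norm_mul, Complex.norm_I, one_mul]
    rw [div_lt_one (by simp [norm_pos_iff, hne])]
    rw [Complex.norm_def, Complex.norm_def]
    apply Real.sqrt_lt_sqrt (Complex.normSq_nonneg _)
    rw [Complex.normSq_apply, Complex.normSq_apply]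
    simp only [Complex.sub_re, Complex.sub_im, Complex.add_re, Complex.add_im,
      Complex.one_re, Complex.one_im, hre, him]
    nlinarith
  · have hz1 : Complex.I - Complex.I * (1 - e) / (1 + e)
        = 2 * Complex.I * e / (1 + e) := by
      field_simp
      ring
    have hz2 : Complex.I + Complex.I * (1 - e) / (1 + e)
        = 2 * Complex.I / (1 + e) := by
      field_simp
      ring
    have h2I : (2 : ℂ) * Complex.I ≠ 0 := by simp [Complex.I_ne_zero]
    have h4 : 2 * Complex.I * e / (1 + e) / (2 * Complex.I / (1 + e)) = e := by
      field_simp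
    rw [hz1, hz2, h4, he, Complex.exp_mul_I]
    exact Complex.arg_cos_add_sin_mul_I ⟨by linarith [Real.pi_pos], by linarith [Real.pi_pos]⟩

lemma aux_hasFDerivAt (c : ℝ) :
    HasFDerivAt (harmF c)
      (Complex.ofRealCLM.comp ((c • Complex.imCLM).comp
        (((1 : ℂ →L[ℂ] ℂ).smulRight (2 * Complex.I)).restrictScalars ℝ))) 0 := by
  have hg : HasDerivAt (fun z : ℂ => (Complex.I - z) / (Complex.I + z)) (2 * Complex.I) 0 := by
    have hu : HasDerivAt (fun z : ℂ => Complex.I - z) (-1) 0 := by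
      simpa using (hasDerivAt_id (0 : ℂ)).const_sub Complex.I
    have hv : HasDerivAt (fun z : ℂ => Complex.I + z) 1 0 := by
      simpa using (hasDerivAt_id (0 : ℂ)).const_add Complex.I
    have h := hu.div hv (by simp [Complex.I_ne_zero])
    have e1 : ((-1 : ℂ) * (Complex.I + 0) - (Complex.I - 0) * 1) / (Complex.I + 0) ^ 2
        = 2 * Complex.I := by
      rw [add_zero, sub_zero, Complex.I_sq]
      ring
    rw [e1] at h
    exact h
  have hg0 : (Complex.I - 0) / (Complex.I + 0) = (1 : ℂ) := by
    simp [div_self Complex.I_ne_zero]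
  have hlog : HasDerivAt Complex.log 1 ((Complex.I - 0) / (Complex.I + 0)) := by
    rw [hg0]
    have h1 : (1 : ℂ) ∈ Complex.slitPlane := by simp [Complex.mem_slitPlane_iff]
    simpa using Complex.hasDerivAt_log h1
  have hF : HasDerivAt (fun z : ℂ => Complex.log ((Complex.I - z) / (Complex.I + z)))
      (2 * Complex.I) 0 := by
    have h := hlog.comp 0 hg
    rw [one_mul] at h
    exact h
  have hfun : harmF c = fun z : ℂ =>
      Complex.ofRealCLM ((c • Complex.imCLM)
        (Complex.log ((Complex.I - z) / (Complex.I + z)))) := by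
    funext z
    simp [harmF, Complex.log_im]
  rw [hfun]
  exact Complex.ofRealCLM.hasFDerivAt.comp 0
    ((c • Complex.imCLM).hasFDerivAt.comp 0 (hF.hasFDerivAt.restrictScalars ℝ))

theorem stmt19 (c : ℝ) :
    ((∀ z : ℂ, ‖z‖ < 1 → ‖harmF c z‖ < 1) ↔ |c| ≤ 2/π) ∧
    harmF c 0 = 0 ∧
    ‖(fderiv ℝ (harmF c) 0 1 - Complex.I * fderiv ℝ (harmF c) 0 Complex.I) / 2‖
      = |c| ∧
    ‖(fderiv ℝ (harmF c) 0 1 + Complex.I * fderiv ℝ (harmF c) 0 Complex.I) / 2‖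
      = |c| := by
  have hπ : 0 < π := Real.pi_pos
  have hD := aux_hasFDerivAt c
  have hd1 : fderiv ℝ (harmF c) 0 1 = ((2 * c : ℝ) : ℂ) := by
    rw [hD.fderiv]
    simp
    ring_nf
  have hdI : fderiv ℝ (harmF c) 0 Complex.I = 0 := by
    rw [hD.fderiv]
    simp
  refine ⟨⟨?_, ?_⟩, ?_, ?_, ?_⟩
  · intro h
    by_contra hc
    push_neg at hc
    have hc0 : 0 < |c| := lt_trans (by positivity) hc
    rw [div_lt_iff₀ hπ] at hc
    set θ := (1 / |c| + π / 2) / 2 with hθ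
    have hinv : 1 / |c| < π / 2 := by
      rw [div_lt_div_iff₀ hc0 two_pos]
      linarith
    have hθ0 : 0 < θ := by positivity
    have hθ2 : θ < π / 2 := by
      rw [hθ]; linarith
    obtain ⟨z, hz1, hz2⟩ := aux_exists θ hθ0 hθ2
    have := h z hz1
    rw [harmF, hz2, Complex.norm_real, Real.norm_eq_abs, abs_mul, abs_of_pos hθ0] at this
    have hmul : 1 < |c| * θ := by
      have h1 : |c| * (1 / |c|) = 1 := by field_simp
      have h2 : 1 < |c| * (π / 2) := by nlinarith
      rw [hθ]
      nlinarith
    linarith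
  · intro h z hz
    rw [harmF, Complex.norm_real, Real.norm_eq_abs]
    rcases eq_or_ne c 0 with rfl | hc0
    · simpa using one_pos
    · have harg : |Complex.arg ((Complex.I - z) / (Complex.I + z))| < π / 2 :=
        Complex.abs_arg_lt_pi_div_two_iff.2 (Or.inl (aux_re_pos z hz))
      calc |c * Complex.arg ((Complex.I - z) / (Complex.I + z))|
          = |c| * |Complex.arg ((Complex.I - z) / (Complex.I + z))| := abs_mul _ _
        _ < |c| * (π / 2) := by
            exact mul_lt_mul_of_pos_left harg (abs_pos.2 hc0)
        _ ≤ (2 / π) * (π / 2) := by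
            apply mul_le_mul_of_nonneg_right h (by positivity)
        _ = 1 := by field_simp
  · simp [harmF, div_self Complex.I_ne_zero]
  · rw [hd1, hdI]
    have : (((2 * c : ℝ) : ℂ) - Complex.I * 0) / 2 = ((c : ℝ) : ℂ) := by
      push_cast; ring
    rw [this, Complex.norm_real, Real.norm_eq_abs]
  · rw [hd1, hdI]
    have : (((2 * c : ℝ) : ℂ) + Complex.I * 0) / 2 = ((c : ℝ) : ℂ) := by
      push_cast; ring
    rw [this, Complex.norm_real, Real.norm_eq_abs]
end
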